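/- arXiv:2311.01552 — 2 statements merged into one kernel-verified Lean document; each statement's English description precedes it below -/
import Mathlib

section
/- There exists an absolute constant C > 0 such that for every integer N ≥ 1: (i) for every point s ∈ S_N(1,2), there exists a point h in the convex hull of the four points (0,0), (1,1), (1/4,0), (0,1/2) in ℝ² with ‖s − h‖_∞ ≤ C/N; and (ii) for every point h in the convex hull of (0,0), (1,1), (1/4,0), (0,1/2), there exists s ∈ S_N(1,2) with ‖s − h‖_∞ ≤ C/N. -/
/-- `r_A(x)`: number of ordered pairs `(a,b) ∈ A × A` with `a - b = x`. -/
def rZ (A : Finset ℤ) (x : ℤ) : ℕ :=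
  ((A ×ˢ A).filter (fun p => p.1 - p.2 = x)).card

lemma rZ_eq (A : Finset ℤ) (x : ℤ) :
    rZ A x = (A.filter (fun b => b + x ∈ A)).card := by
  unfold rZ
  apply Finset.card_nbij' (fun p => p.2) (fun b => (b + x, b))
  · intro p hp
    simp only [Finset.mem_coe, Finset.mem_filter, Finset.mem_product] at hp ⊢
    obtain ⟨⟨h1, h2⟩, h3⟩ := hp
    exact ⟨h2, by rw [show p.2 + x = p.1 by omega]; exact h1⟩
  · intro b hb
    simp only [Finset.mem_coe, Finset.mem_filter, Finset.mem_product] at hb ⊢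
    exact ⟨⟨hb.2, hb.1⟩, by ring⟩
  · intro p hp
    simp only [Finset.mem_coe, Finset.mem_filter, Finset.mem_product] at hp
    have : p.2 + x = p.1 := by omega
    simp [this]
  · intro b hb; rfl


lemma rZ_le (N : ℕ) (A : Finset ℤ) (hA : A ⊆ Finset.Icc 1 (N : ℤ)) (x : ℤ) :
    rZ A x ≤ N := by
  rw [rZ_eq]
  calc (A.filter (fun b => b + x ∈ A)).card ≤ A.card := Finset.card_filter_le _ _
    _ ≤ (Finset.Icc 1 (N:ℤ)).card := Finset.card_le_card hA
    _ = N := by rw [Int.card_Icc]; simp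

lemma rZ_sum (N : ℕ) (A : Finset ℤ) (hA : A ⊆ Finset.Icc 1 (N : ℤ)) (x : ℤ) :
    (rZ A x : ℤ) = ∑ b ∈ Finset.Icc (1:ℤ) N, (if b ∈ A ∧ b + x ∈ A then (1:ℤ) else 0) := by
  rw [rZ_eq]
  rw [Finset.sum_boole]
  norm_cast
  congr 1
  ext b
  simp only [Finset.mem_filter]
  constructor
  · rintro ⟨hb, h2⟩; exact ⟨hA hb, hb, h2⟩
  · rintro ⟨_, hb, h2⟩; exact ⟨hb, h2⟩

-- potentials
def phi4 (x y z : Bool) : ℤ :=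
  match x, y, z with
  | false, false, false => 0
  | false, false, true => -1
  | false, true, false => 0
  | false, true, true => -2
  | true, false, false => 0
  | true, false, true => 0
  | true, true, false => -3
  | true, true, true => -3

def phi3 (x y z : Bool) : ℤ :=
  match x, y, z with
  | true, false, true => -1
  | _, _, _ => 0

lemma phi4_key : ∀ x y z w : Bool,
    (if x && y then (4:ℤ) else 0) - (if x && z then 3 else 0) ≤ 1 + phi4 y z w - phi4 x y z := by
  decide

lemma phi3_key : ∀ x y z w : Bool,
    (if x && z then (2:ℤ) else 0) - (if x && y then 1 else 0) ≤ 1 + phi3 y z w - phi3 x y z := by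
  decide

lemma phi4_bdd : ∀ x y z : Bool, -3 ≤ phi4 x y z ∧ phi4 x y z ≤ 0 := by decide
lemma phi3_bdd : ∀ x y z : Bool, -1 ≤ phi3 x y z ∧ phi3 x y z ≤ 0 := by decide

lemma telescope (g : ℤ → ℤ) : ∀ N : ℕ, 1 ≤ N →
    ∑ b ∈ Finset.Icc (1:ℤ) N, (g (b+1) - g b) = g (N+1) - g 1 := by
  intro N
  induction N with
  | zero => omega
  | succ n ih =>
    intro _
    rcases Nat.eq_or_lt_of_le (Nat.one_le_iff_ne_zero.mpr (by omega) : 1 ≤ n+1) with h | h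
    · rw [show ((n+1:ℕ):ℤ) = 1 by omega, Finset.Icc_self, Finset.sum_singleton]
    · have hn : 1 ≤ n := by omega
      have : Finset.Icc (1:ℤ) ((n+1:ℕ):ℤ) = insert ((n:ℤ)+1) (Finset.Icc (1:ℤ) n) := by
        ext b; simp only [Finset.mem_Icc, Finset.mem_insert]; push_cast; omega
      rw [this, Finset.sum_insert (by simp), ih hn]
      push_cast
      ring


lemma card_Icc_int (N : ℕ) : (Finset.Icc (1:ℤ) N).card = N := by
  rw [Int.card_Icc]; simp

lemma key_ineq1 (N : ℕ) (hN : 1 ≤ N) (A : Finset ℤ) (hA : A ⊆ Finset.Icc 1 (N:ℤ)) :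
    4 * (rZ A 1 : ℤ) ≤ 3 * (rZ A 2 : ℤ) + N + 3 := by
  classical
  set g : ℤ → Bool := fun b => decide (b ∈ A) with hg
  set Φ : ℤ → ℤ := fun b => phi4 (g b) (g (b+1)) (g (b+2)) with hΦ
  have h1 : (rZ A 1 : ℤ) = ∑ b ∈ Finset.Icc (1:ℤ) N, (if g b && g (b+1) then (1:ℤ) else 0) := by
    rw [rZ_sum N A hA 1]
    refine Finset.sum_congr rfl fun b _ => ?_
    by_cases hb : b ∈ A <;> by_cases hb' : b + 1 ∈ A <;> simp [hg, hb, hb']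
  have h2 : (rZ A 2 : ℤ) = ∑ b ∈ Finset.Icc (1:ℤ) N, (if g b && g (b+2) then (1:ℤ) else 0) := by
    rw [rZ_sum N A hA 2]
    refine Finset.sum_congr rfl fun b _ => ?_
    by_cases hb : b ∈ A <;> by_cases hb' : b + 2 ∈ A <;> simp [hg, hb, hb']
  have key : ∑ b ∈ Finset.Icc (1:ℤ) N,
      ((if g b && g (b+1) then (4:ℤ) else 0) - (if g b && g (b+2) then 3 else 0))
      ≤ ∑ b ∈ Finset.Icc (1:ℤ) N, (1 + (Φ (b+1) - Φ b)) := by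
    refine Finset.sum_le_sum fun b _ => ?_
    have := phi4_key (g b) (g (b+1)) (g (b+2)) (g (b+3))
    simp only [hΦ]
    have e1 : b + 1 + 1 = b + 2 := by ring
    have e2 : b + 1 + 2 = b + 3 := by ring
    rw [e1, e2]
    linarith
  rw [Finset.sum_add_distrib, telescope Φ N hN, Finset.sum_const, card_Icc_int] at key
  rw [Finset.sum_sub_distrib] at key
  have e4 : ∑ b ∈ Finset.Icc (1:ℤ) N, (if g b && g (b+1) then (4:ℤ) else 0)
      = 4 * ∑ b ∈ Finset.Icc (1:ℤ) N, (if g b && g (b+1) then (1:ℤ) else 0) := by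
    rw [Finset.mul_sum]; refine Finset.sum_congr rfl fun b _ => ?_; split <;> ring
  have e3 : ∑ b ∈ Finset.Icc (1:ℤ) N, (if g b && g (b+2) then (3:ℤ) else 0)
      = 3 * ∑ b ∈ Finset.Icc (1:ℤ) N, (if g b && g (b+2) then (1:ℤ) else 0) := by
    rw [Finset.mul_sum]; refine Finset.sum_congr rfl fun b _ => ?_; split <;> ring
  rw [e4, e3, ← h1, ← h2] at key
  have b1 := phi4_bdd (g ((N:ℤ)+1)) (g ((N:ℤ)+1+1)) (g ((N:ℤ)+1+2))
  have b2 := phi4_bdd (g 1) (g (1+1)) (g (1+2))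
  simp only [nsmul_eq_mul, mul_one] at key
  have : Φ ((N:ℤ)+1) - Φ 1 ≤ 3 := by
    simp only [hΦ]; omega
  linarith [this, key]


-- construction 1 : block [1,a] plus 1100-pattern, gap 3
lemma key_ineq2 (N : ℕ) (hN : 1 ≤ N) (A : Finset ℤ) (hA : A ⊆ Finset.Icc 1 (N:ℤ)) :
    2 * (rZ A 2 : ℤ) ≤ (rZ A 1 : ℤ) + N + 1 := by
  classical
  set g : ℤ → Bool := fun b => decide (b ∈ A) with hg
  set Φ : ℤ → ℤ := fun b => phi3 (g b) (g (b+1)) (g (b+2)) with hΦ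
  have h1 : (rZ A 1 : ℤ) = ∑ b ∈ Finset.Icc (1:ℤ) N, (if g b && g (b+1) then (1:ℤ) else 0) := by
    rw [rZ_sum N A hA 1]
    refine Finset.sum_congr rfl fun b _ => ?_
    by_cases hb : b ∈ A <;> by_cases hb' : b + 1 ∈ A <;> simp [hg, hb, hb']
  have h2 : (rZ A 2 : ℤ) = ∑ b ∈ Finset.Icc (1:ℤ) N, (if g b && g (b+2) then (1:ℤ) else 0) := by
    rw [rZ_sum N A hA 2]
    refine Finset.sum_congr rfl fun b _ => ?_
    by_cases hb : b ∈ A <;> by_cases hb' : b + 2 ∈ A <;> simp [hg, hb, hb']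
  have key : ∑ b ∈ Finset.Icc (1:ℤ) N,
      ((if g b && g (b+2) then (2:ℤ) else 0) - (if g b && g (b+1) then 1 else 0))
      ≤ ∑ b ∈ Finset.Icc (1:ℤ) N, (1 + (Φ (b+1) - Φ b)) := by
    refine Finset.sum_le_sum fun b _ => ?_
    have := phi3_key (g b) (g (b+1)) (g (b+2)) (g (b+3))
    simp only [hΦ]
    have e1 : b + 1 + 1 = b + 2 := by ring
    have e2 : b + 1 + 2 = b + 3 := by ring
    rw [e1, e2]
    linarith
  rw [Finset.sum_add_distrib, telescope Φ N hN, Finset.sum_const, card_Icc_int] at key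
  rw [Finset.sum_sub_distrib] at key
  have e4 : ∑ b ∈ Finset.Icc (1:ℤ) N, (if g b && g (b+2) then (2:ℤ) else 0)
      = 2 * ∑ b ∈ Finset.Icc (1:ℤ) N, (if g b && g (b+2) then (1:ℤ) else 0) := by
    rw [Finset.mul_sum]; refine Finset.sum_congr rfl fun b _ => ?_; split <;> ring
  rw [e4, ← h1, ← h2] at key
  have b1 := phi3_bdd (g ((N:ℤ)+1)) (g ((N:ℤ)+1+1)) (g ((N:ℤ)+1+2))
  have b2 := phi3_bdd (g 1) (g (1+1)) (g (1+2))
  simp only [nsmul_eq_mul, mul_one] at key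
  have hb : Φ ((N:ℤ)+1) - Φ 1 ≤ 1 := by
    simp only [hΦ]; omega
  linarith [hb, key]

noncomputable def con1 (a : ℤ) (c : ℕ) : Finset ℤ :=
  Finset.Icc 1 a ∪ (Finset.range c).image (fun k : ℕ => a + 4 + 4*(k:ℤ))
    ∪ (Finset.range c).image (fun k : ℕ => a + 5 + 4*(k:ℤ))

lemma con1_mem (a : ℤ) (c : ℕ) (b : ℤ) :
    b ∈ con1 a c ↔ (1 ≤ b ∧ b ≤ a) ∨ (∃ k : ℕ, k < c ∧ a + 4 + 4*(k:ℤ) = b)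
      ∨ (∃ k : ℕ, k < c ∧ a + 5 + 4*(k:ℤ) = b) := by
  simp [con1, Finset.mem_union, Finset.mem_image, Finset.mem_range, Finset.mem_Icc, or_assoc]

lemma con1_subset (N : ℕ) (a : ℤ) (c : ℕ) (ha1 : 1 ≤ a) (haN : a ≤ N)
    (hc : c = 0 ∨ a + 4*(c:ℤ) + 1 ≤ N) : con1 a c ⊆ Finset.Icc 1 (N:ℤ) := by
  intro b hb
  rw [con1_mem] at hb
  simp only [Finset.mem_Icc]
  rcases hc with rfl | hc
  · rcases hb with h | ⟨k, hk, _⟩ | ⟨k, hk, _⟩ <;> omega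
  · rcases hb with h | ⟨k, hk, rfl⟩ | ⟨k, hk, rfl⟩ <;> omega

lemma con1_r1 (a : ℤ) (c : ℕ) (ha : 2 ≤ a) :
    rZ (con1 a c) 1 = (a - 1).toNat + c := by
  rw [rZ_eq]
  have hset : (con1 a c).filter (fun b => b + 1 ∈ con1 a c)
      = Finset.Icc 1 (a - 1) ∪ (Finset.range c).image (fun k : ℕ => a + 4 + 4*(k:ℤ)) := by
    ext b
    simp only [Finset.mem_filter, Finset.mem_union, Finset.mem_image, Finset.mem_range,
      Finset.mem_Icc, con1_mem]
    constructor
    · rintro ⟨h1 | ⟨k, hk, rfl⟩ | ⟨k, hk, rfl⟩, h2⟩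
      · rcases h2 with h2 | ⟨k, hk, hke⟩ | ⟨k, hk, hke⟩ <;> [left; omega; omega]
        omega
      · right; exact ⟨k, hk, rfl⟩
      · rcases h2 with h2 | ⟨k', hk', hke⟩ | ⟨k', hk', hke⟩ <;> omega
    · rintro (h | ⟨k, hk, rfl⟩)
      · exact ⟨Or.inl ⟨h.1, by omega⟩, Or.inl ⟨by omega, by omega⟩⟩
      · exact ⟨Or.inr (Or.inl ⟨k, hk, rfl⟩), Or.inr (Or.inr ⟨k, hk, by ring⟩)⟩
  rw [hset, Finset.card_union_of_disjoint, Int.card_Icc,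
    Finset.card_image_of_injective _ (fun k1 k2 h => by omega)]
  · rw [Finset.card_range]; congr 1; omega
  · rw [Finset.disjoint_left]
    intro x hx hx'
    simp only [Finset.mem_Icc] at hx
    simp only [Finset.mem_image, Finset.mem_range] at hx'
    obtain ⟨k, _, rfl⟩ := hx'
    omega

lemma con1_r2 (a : ℤ) (c : ℕ) (ha : 2 ≤ a) :
    rZ (con1 a c) 2 = (a - 2).toNat := by
  rw [rZ_eq]
  have hset : (con1 a c).filter (fun b => b + 2 ∈ con1 a c) = Finset.Icc 1 (a - 2) := by
    ext b
    simp only [Finset.mem_filter, Finset.mem_Icc, con1_mem]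
    constructor
    · rintro ⟨h1 | ⟨k, hk, rfl⟩ | ⟨k, hk, rfl⟩, h2⟩ <;>
        rcases h2 with h2 | ⟨k', hk', hke⟩ | ⟨k', hk', hke⟩ <;> omega
    · intro h
      exact ⟨Or.inl ⟨h.1, by omega⟩, Or.inl ⟨by omega, by omega⟩⟩
  rw [hset, Int.card_Icc]
  congr 1; omega

-- construction 2 : block [1,a] plus alternating pattern, gap 3
noncomputable def con2 (a : ℤ) (c : ℕ) : Finset ℤ :=
  Finset.Icc 1 a ∪ (Finset.range c).image (fun k : ℕ => a + 4 + 2*(k:ℤ))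

lemma con2_mem (a : ℤ) (c : ℕ) (b : ℤ) :
    b ∈ con2 a c ↔ (1 ≤ b ∧ b ≤ a) ∨ (∃ k : ℕ, k < c ∧ a + 4 + 2*(k:ℤ) = b) := by
  simp [con2, Finset.mem_union, Finset.mem_image, Finset.mem_range, Finset.mem_Icc]

lemma con2_subset (N : ℕ) (a : ℤ) (c : ℕ) (ha1 : 1 ≤ a) (haN : a ≤ N)
    (hc : c = 0 ∨ a + 2*(c:ℤ) + 2 ≤ N) : con2 a c ⊆ Finset.Icc 1 (N:ℤ) := by
  intro b hb
  rw [con2_mem] at hb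
  simp only [Finset.mem_Icc]
  rcases hc with rfl | hc
  · rcases hb with h | ⟨k, hk, _⟩ <;> omega
  · rcases hb with h | ⟨k, hk, rfl⟩ <;> omega

lemma con2_r1 (a : ℤ) (c : ℕ) (ha : 2 ≤ a) :
    rZ (con2 a c) 1 = (a - 1).toNat := by
  rw [rZ_eq]
  have hset : (con2 a c).filter (fun b => b + 1 ∈ con2 a c) = Finset.Icc 1 (a - 1) := by
    ext b
    simp only [Finset.mem_filter, Finset.mem_Icc, con2_mem]
    constructor
    · rintro ⟨h1 | ⟨k, hk, rfl⟩, h2⟩ <;> rcases h2 with h2 | ⟨k', hk', hke⟩ <;> omega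
    · intro h
      exact ⟨Or.inl ⟨h.1, by omega⟩, Or.inl ⟨by omega, by omega⟩⟩
  rw [hset, Int.card_Icc]
  congr 1; omega

lemma con2_r2 (a : ℤ) (c : ℕ) (ha : 2 ≤ a) :
    rZ (con2 a c) 2 = (a - 2).toNat + (c - 1) := by
  rw [rZ_eq]
  have hset : (con2 a c).filter (fun b => b + 2 ∈ con2 a c)
      = Finset.Icc 1 (a - 2) ∪ (Finset.range (c-1)).image (fun k : ℕ => a + 4 + 2*(k:ℤ)) := by
    ext b
    simp only [Finset.mem_filter, Finset.mem_union, Finset.mem_image, Finset.mem_range,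
      Finset.mem_Icc, con2_mem]
    constructor
    · rintro ⟨h1 | ⟨k, hk, rfl⟩, h2⟩
      · rcases h2 with h2 | ⟨k', hk', hke⟩ <;> [skip; omega]
        left; omega
      · rcases h2 with h2 | ⟨k', hk', hke⟩ <;> [omega; skip]
        right; exact ⟨k, by omega, rfl⟩
    · rintro (h | ⟨k, hk, rfl⟩)
      · exact ⟨Or.inl ⟨h.1, by omega⟩, Or.inl ⟨by omega, by omega⟩⟩
      · exact ⟨Or.inr ⟨k, by omega, rfl⟩, Or.inr ⟨k + 1, by omega, by push_cast; ring⟩⟩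
  rw [hset, Finset.card_union_of_disjoint, Int.card_Icc,
    Finset.card_image_of_injective _ (fun k1 k2 h => by omega)]
  · rw [Finset.card_range]; congr 1; omega
  · rw [Finset.disjoint_left]
    intro x hx hx'
    simp only [Finset.mem_Icc] at hx
    simp only [Finset.mem_image, Finset.mem_range] at hx'
    obtain ⟨k, _, rfl⟩ := hx'
    omega


lemma approx1 (N : ℕ) (hN : 1000 ≤ N) (u v : ℝ) (h0 : 0 ≤ u) (h1 : 0 ≤ v)
    (h2 : 4*u - 3*v ≤ 1) (h3 : 2*v - u ≤ 1) (hvu : v ≤ u) :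
    ∃ A : Finset ℤ, A ⊆ Finset.Icc 1 (N:ℤ) ∧
      |(rZ A 1 : ℝ) - u*N| ≤ 10 ∧ |(rZ A 2 : ℝ) - v*N| ≤ 10 := by
  have hNR : (1000:ℝ) ≤ N := by exact_mod_cast hN
  have hNpos : (0:ℝ) < N := by linarith
  have hu1 : u ≤ 1 := by linarith
  have hv1 : v ≤ 1 := by linarith
  set a : ℤ := min (⌊v*N⌋ + 2) (N:ℤ) with ha
  have hfl : (⌊v*(N:ℝ)⌋ : ℝ) ≤ v*N := Int.floor_le _
  have hfl2 : v*(N:ℝ) < ⌊v*(N:ℝ)⌋ + 1 := Int.lt_floor_add_one _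
  have hflnn : 0 ≤ ⌊v*(N:ℝ)⌋ := Int.floor_nonneg.mpr (by positivity)
  have haN : a ≤ (N:ℤ) := min_le_right _ _
  have hN2 : (2:ℤ) ≤ N := by exact_mod_cast le_trans (by norm_num) hN
  have ha2 : 2 ≤ a := le_min (by omega) hN2
  have haR1 : (a:ℝ) ≤ v*N + 2 := by
    have h' : (a:ℤ) ≤ ⌊v*N⌋ + 2 := min_le_left _ _
    have : (a:ℝ) ≤ ((⌊v*(N:ℝ)⌋ + 2 : ℤ) : ℝ) := by exact_mod_cast h'
    push_cast at this
    linarith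
  have haR0 : v*N ≤ (a:ℝ) := by
    rcases min_cases (⌊v*(N:ℝ)⌋ + 2) ((N:ℤ)) with ⟨he, _⟩ | ⟨he, _⟩ <;> rw [ha, he]
    · push_cast; linarith
    · push_cast; nlinarith
  set d1 : ℤ := ⌊(u - v)*(N:ℝ)⌋ with hd1
  set d2 : ℤ := ((N:ℤ) - a - 1) / 4 with hd2
  set c : ℕ := (min d1 d2).toNat with hc
  have hd1nn : 0 ≤ d1 := Int.floor_nonneg.mpr (by nlinarith)
  have hd1R : (d1:ℝ) ≤ (u-v)*N := Int.floor_le _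
  have hd1R2 : (u-v)*N - 1 < (d1:ℝ) := Int.sub_one_lt_floor _
  have hcR_le : (c:ℝ) ≤ (u-v)*N := by
    have h' : (c:ℤ) ≤ d1 := by omega
    have : ((c:ℤ):ℝ) ≤ (d1:ℝ) := by exact_mod_cast h'
    push_cast at this
    linarith
  have hyR : 4*((u-v)*N) - 3 ≤ (((N:ℤ) - a - 1 : ℤ) : ℝ) := by
    have h4 : 4*((u-v)*N) ≤ (N:ℝ) - v*N := by nlinarith
    push_cast
    linarith
  have hd2R : (u-v)*N - 3/2 ≤ (d2:ℝ) := by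
    have hy3 : -3 ≤ (N:ℤ) - a - 1 := by
      have : (-3:ℝ) ≤ (((N:ℤ) - a - 1 : ℤ):ℝ) := le_trans (by nlinarith) hyR
      exact_mod_cast this
    have h4 : ((N:ℤ) - a - 1) - 3 ≤ 4 * d2 := by omega
    have h4R : (((N:ℤ) - a - 1 : ℤ):ℝ) - 3 ≤ 4 * (d2:ℝ) := by exact_mod_cast h4
    linarith
  have hcR_ge : (u-v)*N - 5/2 ≤ (c:ℝ) := by
    rcases le_total d1 d2 with h | h
    · have h' : (c:ℤ) = d1 := by omega
      have : ((c:ℤ):ℝ) = (d1:ℝ) := by exact_mod_cast h'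
      push_cast at this
      linarith
    · have h' : d2 ≤ (c:ℤ) := by omega
      have : (d2:ℝ) ≤ ((c:ℤ):ℝ) := by exact_mod_cast h'
      push_cast at this
      linarith
  have hsub : c = 0 ∨ a + 4*(c:ℤ) + 1 ≤ (N:ℤ) := by
    by_cases hc0 : c = 0
    · exact Or.inl hc0
    · right; omega
  refine ⟨con1 a c, con1_subset N a c (by omega) haN hsub, ?_, ?_⟩
  · rw [con1_r1 a c ha2]
    have he : (((a-1).toNat + c : ℕ) : ℝ) = (a:ℝ) - 1 + c := by
      have hz : (((a-1).toNat + c : ℕ) : ℤ) = a - 1 + c := by omega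
      exact_mod_cast hz
    rw [he, abs_le]
    constructor <;> linarith
  · rw [con1_r2 a c ha2]
    have he : (((a-2).toNat : ℕ) : ℝ) = (a:ℝ) - 2 := by
      have hz : (((a-2).toNat : ℕ) : ℤ) = a - 2 := by omega
      exact_mod_cast hz
    rw [he, abs_le]
    constructor <;> linarith

lemma approx2 (N : ℕ) (hN : 1000 ≤ N) (u v : ℝ) (h0 : 0 ≤ u) (h1 : 0 ≤ v)
    (h2 : 4*u - 3*v ≤ 1) (h3 : 2*v - u ≤ 1) (huv : u ≤ v) :
    ∃ A : Finset ℤ, A ⊆ Finset.Icc 1 (N:ℤ) ∧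
      |(rZ A 1 : ℝ) - u*N| ≤ 10 ∧ |(rZ A 2 : ℝ) - v*N| ≤ 10 := by
  have hNR : (1000:ℝ) ≤ N := by exact_mod_cast hN
  have hNpos : (0:ℝ) < N := by linarith
  have hu1 : u ≤ 1 := by linarith
  have hv1 : v ≤ 1 := by linarith
  set a : ℤ := min (⌊u*N⌋ + 2) (N:ℤ) with ha
  have hfl : (⌊u*(N:ℝ)⌋ : ℝ) ≤ u*N := Int.floor_le _
  have hfl2 : u*(N:ℝ) < ⌊u*(N:ℝ)⌋ + 1 := Int.lt_floor_add_one _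
  have hflnn : 0 ≤ ⌊u*(N:ℝ)⌋ := Int.floor_nonneg.mpr (by positivity)
  have haN : a ≤ (N:ℤ) := min_le_right _ _
  have hN2 : (2:ℤ) ≤ N := by exact_mod_cast le_trans (by norm_num) hN
  have ha2 : 2 ≤ a := le_min (by omega) hN2
  have haR1 : (a:ℝ) ≤ u*N + 2 := by
    have h' : (a:ℤ) ≤ ⌊u*N⌋ + 2 := min_le_left _ _
    have : (a:ℝ) ≤ ((⌊u*(N:ℝ)⌋ + 2 : ℤ) : ℝ) := by exact_mod_cast h'
    push_cast at this
    linarith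
  have haR0 : u*N ≤ (a:ℝ) := by
    rcases min_cases (⌊u*(N:ℝ)⌋ + 2) ((N:ℤ)) with ⟨he, _⟩ | ⟨he, _⟩ <;> rw [ha, he]
    · push_cast; linarith
    · push_cast; nlinarith
  set d1 : ℤ := ⌊(v - u)*(N:ℝ)⌋ + 1 with hd1
  set d2 : ℤ := ((N:ℤ) - a - 2) / 2 with hd2
  set c : ℕ := (min d1 d2).toNat with hc
  have hd1fl : (⌊(v - u)*(N:ℝ)⌋ : ℝ) ≤ (v-u)*N := Int.floor_le _
  have hd1fl2 : (v-u)*N - 1 < (⌊(v - u)*(N:ℝ)⌋ : ℝ) := Int.sub_one_lt_floor _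
  have hd1nn : 0 ≤ ⌊(v - u)*(N:ℝ)⌋ := Int.floor_nonneg.mpr (by nlinarith)
  -- bounds on (c - 1 : ℕ)
  have hcm_le : ((c - 1 : ℕ) : ℝ) ≤ (v-u)*N := by
    have h' : ((c - 1 : ℕ) : ℤ) ≤ ⌊(v - u)*(N:ℝ)⌋ := by omega
    have h'' : ((c - 1 : ℕ) : ℝ) ≤ ((⌊(v - u)*(N:ℝ)⌋ : ℤ) : ℝ) := by exact_mod_cast h'
    linarith
  have hyR : 2*((v-u)*N) - 4 ≤ (((N:ℤ) - a - 2 : ℤ) : ℝ) := by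
    have h4 : 2*((v-u)*N) ≤ (N:ℝ) - u*N := by nlinarith
    push_cast
    linarith
  have hd2R : (v-u)*N - 5/2 ≤ (d2:ℝ) := by
    have hy3 : -4 ≤ (N:ℤ) - a - 2 := by
      have : (-4:ℝ) ≤ (((N:ℤ) - a - 2 : ℤ):ℝ) := le_trans (by nlinarith) hyR
      exact_mod_cast this
    have h4 : ((N:ℤ) - a - 2) - 1 ≤ 2 * d2 := by omega
    have h4R : (((N:ℤ) - a - 2 : ℤ):ℝ) - 1 ≤ 2 * (d2:ℝ) := by exact_mod_cast h4
    linarith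
  have hcm_ge : (v-u)*N - 9/2 ≤ ((c - 1 : ℕ) : ℝ) := by
    rcases le_total d1 d2 with h | h
    · have h' : ⌊(v - u)*(N:ℝ)⌋ ≤ ((c - 1 : ℕ) : ℤ) := by omega
      have h'' : ((⌊(v - u)*(N:ℝ)⌋ : ℤ) : ℝ) ≤ ((c - 1 : ℕ) : ℝ) := by exact_mod_cast h'
      linarith
    · have h' : d2 - 1 ≤ ((c - 1 : ℕ) : ℤ) := by omega
      have h'' : (d2 : ℝ) - 1 ≤ ((c - 1 : ℕ) : ℝ) := by exact_mod_cast h'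
      linarith
  have hsub : c = 0 ∨ a + 2*(c:ℤ) + 2 ≤ (N:ℤ) := by
    by_cases hc0 : c = 0
    · exact Or.inl hc0
    · right; omega
  refine ⟨con2 a c, con2_subset N a c (by omega) haN hsub, ?_, ?_⟩
  · rw [con2_r1 a c ha2]
    have he : (((a-1).toNat : ℕ) : ℝ) = (a:ℝ) - 1 := by
      have hz : (((a-1).toNat : ℕ) : ℤ) = a - 1 := by omega
      exact_mod_cast hz
    rw [he, abs_le]
    constructor <;> linarith
  · rw [con2_r2 a c ha2]
    have he : (((a-2).toNat + (c-1) : ℕ) : ℝ) = (a:ℝ) - 2 + ((c - 1 : ℕ) : ℝ) := by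
      have hz : (((a-2).toNat + (c-1) : ℕ) : ℤ) = a - 2 + ((c-1 : ℕ) : ℤ) := by omega
      exact_mod_cast hz
    rw [he, abs_le]
    constructor <;> linarith



def Kpts : Set (Fin 2 → ℝ) := {![0, 0], ![1, 1], ![1 / 4, 0], ![0, 1 / 2]}

lemma combo3 {E : Type*} [AddCommGroup E] [Module ℝ E] {K : Set E} {p q r : E}
    (hp : p ∈ K) (hq : q ∈ K) (hr : r ∈ K) {a b c : ℝ}
    (ha : 0 ≤ a) (hb : 0 ≤ b) (hc : 0 ≤ c) (habc : a + b + c = 1) :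
    a • p + b • q + c • r ∈ convexHull ℝ K := by
  have h := Finset.centerMass_mem_convexHull (Finset.univ : Finset (Fin 3))
    (w := ![a, b, c]) (z := ![p, q, r]) (s := K) ?_ ?_ ?_
  · have : (Finset.univ : Finset (Fin 3)).centerMass ![a, b, c] ![p, q, r]
        = a • p + b • q + c • r := by
      rw [Finset.centerMass]
      rw [Fin.sum_univ_three, Fin.sum_univ_three]
      simp only [Matrix.cons_val_zero, Matrix.cons_val_one, Matrix.head_cons,
        Matrix.cons_val_two, Matrix.tail_cons]
      rw [habc]
      simp
    rwa [this] at h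
  · intro i _; fin_cases i <;> simpa
  · rw [Fin.sum_univ_three]
    simp only [Matrix.cons_val_zero, Matrix.cons_val_one, Matrix.head_cons,
      Matrix.cons_val_two, Matrix.tail_cons]
    rw [habc]; norm_num
  · intro i _; fin_cases i <;> simpa using ‹_›

lemma mem_hull (u v : ℝ) (h0 : 0 ≤ u) (h1 : 0 ≤ v) (h2 : 4*u - 3*v ≤ 1) (h3 : 2*v - u ≤ 1) :
    ![u, v] ∈ convexHull ℝ Kpts := by
  rcases le_total v u with hvu | huv
  · have := combo3 (K := Kpts) (p := ![0,0]) (q := ![1,1]) (r := ![1/4, 0])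
      (by simp [Kpts]) (by simp [Kpts]) (by simp [Kpts])
      (a := 1 - 4*u + 3*v) (b := v) (c := 4*(u - v))
      (by linarith) h1 (by linarith) (by ring)
    convert this using 1
    funext i
    fin_cases i <;>
      simp [Matrix.cons_val_zero, Matrix.cons_val_one, Matrix.head_cons] <;> ring
  · have := combo3 (K := Kpts) (p := ![0,0]) (q := ![1,1]) (r := ![0, 1/2])
      (by simp [Kpts]) (by simp [Kpts]) (by simp [Kpts])
      (a := 1 + u - 2*v) (b := u) (c := 2*(v - u))
      (by linarith) h0 (by linarith) (by ring)
    convert this using 1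
    funext i
    fin_cases i <;>
      simp [Matrix.cons_val_zero, Matrix.cons_val_one, Matrix.head_cons] <;> ring

lemma hull_sub : convexHull ℝ Kpts ⊆
    {p : Fin 2 → ℝ | 0 ≤ p 0 ∧ 0 ≤ p 1 ∧ 4 * p 0 - 3 * p 1 ≤ 1 ∧ 2 * p 1 - p 0 ≤ 1} := by
  apply convexHull_min
  · rintro p (rfl | rfl | rfl | rfl) <;>
      simp only [Set.mem_setOf_eq, Matrix.cons_val_zero, Matrix.cons_val_one,
        Matrix.head_cons] <;> norm_num
  · rintro x hx y hy a b ha hb hab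
    simp only [Set.mem_setOf_eq, Pi.add_apply, Pi.smul_apply, smul_eq_mul] at *
    refine ⟨by nlinarith, by nlinarith, by nlinarith, by nlinarith⟩

/-- `S_N(x_1,…,x_d)`: normalized difference-convolution vectors of subsets of `{1,…,N}`. -/
def SN (N d : ℕ) (x : Fin d → ℤ) : Set (Fin d → ℝ) :=
  { v | ∃ A : Finset ℤ, A ⊆ Finset.Icc 1 (N : ℤ) ∧ ∀ j, v j = (rZ A (x j) : ℝ) / N }

theorem stmt5 :
    ∃ C : ℝ, 0 < C ∧ ∀ N : ℕ, 1 ≤ N →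
      (∀ s ∈ SN N 2 ![1, 2],
        ∃ h ∈ convexHull ℝ
          ({![0, 0], ![1, 1], ![1 / 4, 0], ![0, 1 / 2]} : Set (Fin 2 → ℝ)),
          ‖s - h‖ ≤ C / N) ∧
      (∀ h ∈ convexHull ℝ
          ({![0, 0], ![1, 1], ![1 / 4, 0], ![0, 1 / 2]} : Set (Fin 2 → ℝ)),
        ∃ s ∈ SN N 2 ![1, 2], ‖s - h‖ ≤ C / N) := by
  refine ⟨1000, by norm_num, fun N hN => ⟨?_, ?_⟩⟩
  · -- part (i)
    rintro s ⟨A, hA, hs⟩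
    have hNpos : (0:ℝ) < N := by exact_mod_cast Nat.pos_of_ne_zero (by omega)
    have hr1 : (0:ℝ) ≤ (rZ A 1 : ℝ) := by positivity
    have hr2 : (0:ℝ) ≤ (rZ A 2 : ℝ) := by positivity
    have hu1 : (rZ A 1 : ℝ) ≤ N := by exact_mod_cast rZ_le N A hA 1
    have hv1 : (rZ A 2 : ℝ) ≤ N := by exact_mod_cast rZ_le N A hA 2
    have k1 : 4 * (rZ A 1 : ℝ) ≤ 3 * (rZ A 2 : ℝ) + N + 3 := by
      exact_mod_cast key_ineq1 N hN A hA
    have k2 : 2 * (rZ A 2 : ℝ) ≤ (rZ A 1 : ℝ) + N + 1 := by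
      exact_mod_cast key_ineq2 N hN A hA
    set u : ℝ := (rZ A 1 : ℝ) / N with hu
    set v : ℝ := (rZ A 2 : ℝ) / N with hv
    set t : ℝ := N / (N + 3) with ht
    have hN3 : (0:ℝ) < N + 3 := by linarith
    have ht0 : 0 ≤ t := by positivity
    have ht1 : t ≤ 1 := by rw [ht, div_le_one hN3]; linarith
    have hu01 : 0 ≤ u := by positivity
    have hv01 : 0 ≤ v := by positivity
    have huu : u ≤ 1 := by rw [hu, div_le_one hNpos]; linarith
    have hvv : v ≤ 1 := by rw [hv, div_le_one hNpos]; linarith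
    refine ⟨![t*u, t*v], mem_hull (t*u) (t*v) (by positivity) (by positivity) ?_ ?_, ?_⟩
    · have he : 4*(t*u) - 3*(t*v) = (4*(rZ A 1 : ℝ) - 3*(rZ A 2 : ℝ)) / (N + 3) := by
        rw [ht, hu, hv]; field_simp
      rw [he, div_le_one hN3]; linarith
    · have he : 2*(t*v) - t*u = (2*(rZ A 2 : ℝ) - (rZ A 1 : ℝ)) / (N + 3) := by
        rw [ht, hu, hv]; field_simp
      rw [he, div_le_one hN3]; linarith
    · rw [pi_norm_le_iff_of_nonneg (by positivity)]
      intro i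
      have h1t : 1 - t = 3 / (N + 3) := by rw [ht]; field_simp; ring
      have hkey : ∀ w : ℝ, 0 ≤ w → w ≤ 1 → |w - t*w| ≤ 1000 / N := by
        intro w hw0 hw1
        have : w - t*w = w*(1-t) := by ring
        rw [this, abs_of_nonneg (by nlinarith)]
        have h1 : w*(1-t) ≤ 1-t := by nlinarith
        have h2 : (3:ℝ) / (N+3) ≤ 1000 / N := by
          rw [div_le_div_iff₀ hN3 hNpos]; nlinarith
        linarith [h1t ▸ h1]
      revert i
      rw [Fin.forall_fin_two]
      constructor
      · have hs0 := hs 0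
        simp only [Matrix.cons_val_zero] at hs0
        simp only [Pi.sub_apply, Matrix.cons_val_zero, Real.norm_eq_abs, hs0]
        exact hkey u hu01 huu
      · have hs1 := hs 1
        simp only [Matrix.cons_val_one, Matrix.head_cons] at hs1
        simp only [Pi.sub_apply, Matrix.cons_val_one, Matrix.head_cons, Real.norm_eq_abs, hs1]
        exact hkey v hv01 hvv
  · -- part (ii)
    intro h hh
    have hNpos : (0:ℝ) < N := by exact_mod_cast Nat.pos_of_ne_zero (by omega)
    obtain ⟨hh0, hh1, hh2, hh3⟩ := hull_sub hh
    have hu1 : h 0 ≤ 1 := by linarith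
    have hv1 : h 1 ≤ 1 := by linarith
    by_cases hbig : 1000 ≤ N
    · have happrox : ∃ A : Finset ℤ, A ⊆ Finset.Icc 1 (N:ℤ) ∧
          |(rZ A 1 : ℝ) - h 0 * N| ≤ 10 ∧ |(rZ A 2 : ℝ) - h 1 * N| ≤ 10 := by
        rcases le_total (h 1) (h 0) with hvu | huv
        · exact approx1 N hbig (h 0) (h 1) hh0 hh1 hh2 hh3 hvu
        · exact approx2 N hbig (h 0) (h 1) hh0 hh1 hh2 hh3 huv
      obtain ⟨A, hsub, e1, e2⟩ := happrox
      refine ⟨fun j => (rZ A (![1, 2] j) : ℝ) / N, ⟨A, hsub, fun j => rfl⟩, ?_⟩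
      rw [pi_norm_le_iff_of_nonneg (by positivity)]
      have hkey : ∀ (r : ℕ) (w : ℝ), |(r:ℝ) - w * N| ≤ 10 → |(r:ℝ)/N - w| ≤ 1000 / N := by
        intro r w hr
        have he : (r:ℝ)/N - w = ((r:ℝ) - w*N)/N := by field_simp
        rw [he, abs_div, abs_of_nonneg hNpos.le]
        gcongr
        linarith
      rw [Fin.forall_fin_two]
      constructor
      · simp only [Pi.sub_apply, Matrix.cons_val_zero, Real.norm_eq_abs]
        exact hkey (rZ A 1) (h 0) e1
      · simp only [Pi.sub_apply, Matrix.cons_val_one, Matrix.head_cons, Real.norm_eq_abs]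
        exact hkey (rZ A 2) (h 1) e2
    · push_neg at hbig
      refine ⟨fun _ => 0, ⟨∅, by simp, fun j => by simp [rZ]⟩, ?_⟩
      rw [pi_norm_le_iff_of_nonneg (by positivity)]
      have hN1000 : (N:ℝ) ≤ 1000 := by exact_mod_cast hbig.le
      have hge1 : (1:ℝ) ≤ 1000 / N := by rw [le_div_iff₀ hNpos]; linarith
      rw [Fin.forall_fin_two]
      constructor
      · simp only [Pi.sub_apply, Real.norm_eq_abs]
        have e : (0:ℝ) - h 0 = -(h 0) := by ring
        rw [e, abs_neg, abs_of_nonneg hh0]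
        linarith
      · simp only [Pi.sub_apply, Real.norm_eq_abs]
        have e : (0:ℝ) - h 1 = -(h 1) := by ring
        rw [e, abs_neg, abs_of_nonneg hh1]
        linarith
end

section
/- Let ℓ ≥ 1 and n ≥ 1 be integers, let C ⊆ {1,2,…,ℓ}, and let B := {c + tℓ : c ∈ C, t ∈ {0,1,…,n−1}} ⊆ {1,2,…,nℓ}. Then for every integer j ≥ 1: | #{(b,b') ∈ B×B : b − b' = j} − n·#{(c,c') ∈ C×C : c ≡ c' + j (mod ℓ)} | ≤ j. -/
open Finset

private lemma small_mul_zero {L x k : ℤ} (hL : 0 < L) (h : x = k * L)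
    (hx : |x| < L) : x = 0 ∧ k = 0 := by
  have hk' : |k| < 1 := by
    by_contra hc
    push_neg at hc
    have h2 : L ≤ |x| := by
      rw [h, abs_mul, abs_of_pos hL]; nlinarith [abs_nonneg k]
    linarith
  have hk0 : k = 0 := by
    rcases abs_lt.mp hk' with ⟨h1, h2⟩; omega
  exact ⟨by simp [h, hk0], hk0⟩

private lemma range_pair_count (n s : ℕ) :
    ((Finset.range n ×ˢ Finset.range n).filter (fun q => q.1 = q.2 + s)).card = n - s := by
  have he : ((Finset.range n ×ˢ Finset.range n).filter (fun q => q.1 = q.2 + s))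
      = (Finset.range (n - s)).image (fun t => (t + s, t)) := by
    ext ⟨a, b⟩
    simp only [mem_filter, mem_product, mem_range, mem_image, Prod.mk.injEq]
    constructor
    · rintro ⟨⟨ha, hb⟩, hab⟩; exact ⟨b, by omega, by omega, rfl⟩
    · rintro ⟨t, ht, h1, h2⟩; omega
  rw [he, Finset.card_image_of_injective _ (fun a b h => by
    simpa using congrArg Prod.snd h)]
  simp

set_option maxHeartbeats 2000000 in
theorem stmt11 (l n : ℕ) (hl : 1 ≤ l) (hn : 1 ≤ n) (C : Finset ℤ)
    (hC : C ⊆ Finset.Icc 1 (l : ℤ)) (B : Finset ℤ)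
    (hB : B = (C ×ˢ Finset.range n).image (fun p => p.1 + (p.2 : ℤ) * (l : ℤ)))
    (j : ℤ) (hj : 1 ≤ j) :
    |(((B ×ˢ B).filter (fun p => p.1 - p.2 = j)).card : ℤ)
        - (n : ℤ) * (((C ×ˢ C).filter
            (fun p => p.1 % (l : ℤ) = (p.2 + j) % (l : ℤ))).card : ℤ)| ≤ j := by
  have hL : (0:ℤ) < (l:ℤ) := by exact_mod_cast hl
  set L : ℤ := (l:ℤ) with hLdef
  set P : Finset (ℤ × ℤ) := (C ×ˢ C).filter (fun p => p.1 % L = (p.2 + j) % L) with hPdef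
  set S : ℤ × ℤ → ℕ := fun p => ((p.2 + j - p.1) / L).toNat with hSdef
  have hCb : ∀ c ∈ C, 1 ≤ c ∧ c ≤ L := fun c hc => Finset.mem_Icc.mp (hC hc)
  -- key facts about members of P
  have hPmem : ∀ p ∈ P, p.1 ∈ C ∧ p.2 ∈ C ∧ (S p : ℤ) * L = p.2 + j - p.1 := by
    intro p hp
    rw [hPdef, mem_filter, mem_product] at hp
    obtain ⟨⟨h1, h2⟩, h3⟩ := hp
    have hd : L ∣ (p.2 + j - p.1) := Int.ModEq.dvd h3
    have hx : 0 ≤ p.2 + j - p.1 := by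
      obtain ⟨k, hk⟩ := hd
      obtain ⟨hb1, hb2⟩ := hCb _ h1
      obtain ⟨hb3, hb4⟩ := hCb _ h2
      have hkge : 0 ≤ k := by
        by_contra hc
        push_neg at hc
        have hk1 : k ≤ -1 := by omega
        nlinarith
      nlinarith [mul_nonneg hL.le hkge]
    refine ⟨h1, h2, ?_⟩
    rw [hSdef]
    simp only
    rw [Int.toNat_of_nonneg (Int.ediv_nonneg hx hL.le)]
    exact Int.ediv_mul_cancel hd
  -- step A : count of B-pairs
  have hcount : ((B ×ˢ B).filter (fun p => p.1 - p.2 = j)).card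
      = ∑ p ∈ P, (n - S p) := by
    have hsig : (P.sigma fun p => (Finset.range n ×ˢ Finset.range n).filter
        (fun q => q.1 = q.2 + S p)).card = ∑ p ∈ P, (n - S p) := by
      rw [Finset.card_sigma]
      exact Finset.sum_congr rfl (fun p _ => range_pair_count n (S p))
    rw [← hsig]
    refine (Finset.card_nbij
      (fun x => (x.1.1 + (x.2.1:ℤ) * L, x.1.2 + (x.2.2:ℤ) * L)) ?_ ?_ ?_).symm
    · rintro ⟨p, q⟩ hx
      simp only [Finset.mem_coe, Finset.mem_sigma, Finset.mem_filter, Finset.mem_product,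
        Finset.mem_range] at hx
      obtain ⟨hp, ⟨hq1, hq2⟩, hq3⟩ := hx
      obtain ⟨h1, h2, hSL⟩ := hPmem p hp
      show (p.1 + (q.1:ℤ) * L, p.2 + (q.2:ℤ) * L) ∈
        (B ×ˢ B).filter (fun r => r.1 - r.2 = j)
      rw [Finset.mem_filter, Finset.mem_product]
      refine ⟨⟨?_, ?_⟩, ?_⟩
      · rw [hB, Finset.mem_image]
        exact ⟨(p.1, q.1), Finset.mem_product.mpr ⟨h1, Finset.mem_range.mpr hq1⟩, rfl⟩
      · rw [hB, Finset.mem_image]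
        exact ⟨(p.2, q.2), Finset.mem_product.mpr ⟨h2, Finset.mem_range.mpr hq2⟩, rfl⟩
      · have : (q.1 : ℤ) = (q.2 : ℤ) + (S p : ℤ) := by exact_mod_cast hq3
        simp only
        nlinarith [hSL, this]
    · rintro ⟨p, q⟩ hx ⟨p', q'⟩ hy hxy
      simp only [Finset.coe_sigma, Set.mem_sigma_iff, Finset.mem_coe,
        Finset.mem_filter, Finset.mem_product] at hx hy
      obtain ⟨hp, -⟩ := hx
      obtain ⟨hp', -⟩ := hy
      obtain ⟨h1, h2, -⟩ := hPmem p hp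
      obtain ⟨h1', h2', -⟩ := hPmem p' hp'
      obtain ⟨ha1, ha2⟩ := hCb _ h1
      obtain ⟨ha3, ha4⟩ := hCb _ h2
      obtain ⟨ha5, ha6⟩ := hCb _ h1'
      obtain ⟨ha7, ha8⟩ := hCb _ h2'
      simp only [Prod.mk.injEq] at hxy
      obtain ⟨he1, he2⟩ := hxy
      have heq1 : p.1 - p'.1 = ((q'.1:ℤ) - q.1) * L := by linarith
      have habs1 : |p.1 - p'.1| < L := by rw [abs_lt]; constructor <;> linarith
      obtain ⟨hz1, hz2⟩ := small_mul_zero hL heq1 habs1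
      have heq2 : p.2 - p'.2 = ((q'.2:ℤ) - q.2) * L := by linarith
      have habs2 : |p.2 - p'.2| < L := by rw [abs_lt]; constructor <;> linarith
      obtain ⟨hz3, hz4⟩ := small_mul_zero hL heq2 habs2
      have hpp : p = p' := Prod.ext (by linarith) (by linarith)
      have hq1 : q.1 = q'.1 := by
        have : (q.1:ℤ) = (q'.1:ℤ) := by linarith
        exact_mod_cast this
      have hq2 : q.2 = q'.2 := by
        have : (q.2:ℤ) = (q'.2:ℤ) := by linarith
        exact_mod_cast this
      have hqq : q = q' := Prod.ext hq1 hq2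
      subst hpp; subst hqq; rfl
    · rintro ⟨b, b'⟩ hb
      simp only [Finset.mem_coe, Finset.mem_filter, Finset.mem_product] at hb
      obtain ⟨⟨hb1, hb2⟩, hbj⟩ := hb
      rw [hB, Finset.mem_image] at hb1 hb2
      obtain ⟨⟨c, t⟩, hct, hbe⟩ := hb1
      obtain ⟨⟨c', t'⟩, hct', hbe'⟩ := hb2
      rw [Finset.mem_product] at hct hct'
      obtain ⟨hcC, htn⟩ := hct
      obtain ⟨hcC', htn'⟩ := hct'
      rw [Finset.mem_range] at htn htn'
      simp only at hbe hbe'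
      obtain ⟨hd1, hd2⟩ := hCb _ hcC
      obtain ⟨hd3, hd4⟩ := hCb _ hcC'
      have hdiff : c + (t:ℤ) * L - (c' + (t':ℤ) * L) = j := by
        rw [hbe, hbe']; exact hbj
      have hdvd : L ∣ (c' + j) - c := ⟨(t:ℤ) - t', by linarith⟩
      have hmod : c % L = (c' + j) % L := Int.modEq_iff_dvd.mpr hdvd
      have hPm : (c, c') ∈ P := by
        rw [hPdef, Finset.mem_filter, Finset.mem_product]
        exact ⟨⟨hcC, hcC'⟩, hmod⟩
      obtain ⟨-, -, hSL⟩ := hPmem (c, c') hPm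
      have hts : (t:ℤ) = (t':ℤ) + (S (c, c') : ℤ) := by
        have h7 : ((t:ℤ) - t') * L = (S (c, c') : ℤ) * L := by
          simp only at hSL; linarith
        have := mul_right_cancel₀ hL.ne' h7
        linarith
      have htsn : t = t' + S (c, c') := by exact_mod_cast hts
      refine ⟨⟨(c, c'), (t, t')⟩, ?_, ?_⟩
      · simp only [Finset.coe_sigma, Set.mem_sigma_iff, Finset.mem_coe,
          Finset.mem_filter, Finset.mem_product, Finset.mem_range]
        exact ⟨hPm, ⟨htn, htn'⟩, htsn⟩
      · simp only [Prod.mk.injEq]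
        exact ⟨hbe, hbe'⟩
  -- step C : sum of shifts is at most j
  have hsum : ((∑ p ∈ P, S p : ℕ) : ℤ) ≤ j := by
    have hcard : ∑ p ∈ P, S p = (P.sigma fun p => Finset.range (S p)).card := by
      rw [Finset.card_sigma]; simp
    have hle : (P.sigma fun p => Finset.range (S p)).card ≤ (Finset.Icc (1:ℤ) j).card := by
      refine Finset.card_le_card_of_injOn (fun x => x.1.1 + (x.2:ℤ) * L) ?_ ?_
      · rintro ⟨p, k⟩ hx
        rw [Finset.mem_coe, Finset.mem_sigma, Finset.mem_range] at hx
        obtain ⟨hp, hk⟩ := hx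
        obtain ⟨h1, h2, hSL⟩ := hPmem p hp
        obtain ⟨hb1, hb2⟩ := hCb _ h1
        obtain ⟨hb3, hb4⟩ := hCb _ h2
        have hk0 : (k:ℤ) < (S p : ℤ) := by exact_mod_cast hk
        have hk' : (k:ℤ) ≤ (S p : ℤ) - 1 := by linarith
        show p.1 + (k:ℤ) * L ∈ Finset.Icc 1 j
        rw [Finset.mem_Icc]
        constructor
        · have : 0 ≤ (k:ℤ) * L := mul_nonneg (by positivity) hL.le
          linarith
        · have h5 : (k:ℤ) * L ≤ ((S p : ℤ) - 1) * L := mul_le_mul_of_nonneg_right hk' hL.le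
          nlinarith
      · rintro ⟨p, k⟩ hx ⟨q, m⟩ hy hxy
        simp only [Finset.coe_sigma, Set.mem_sigma_iff, Finset.mem_coe,
          Finset.mem_range] at hx hy
        obtain ⟨hp, -⟩ := hx
        obtain ⟨hq, -⟩ := hy
        obtain ⟨hp1, hp2, -⟩ := hPmem p hp
        obtain ⟨hq1, hq2, -⟩ := hPmem q hq
        obtain ⟨ha1, ha2⟩ := hCb _ hp1
        obtain ⟨ha3, ha4⟩ := hCb _ hq1
        obtain ⟨ha5, ha6⟩ := hCb _ hp2
        obtain ⟨ha7, ha8⟩ := hCb _ hq2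
        simp only at hxy
        have heq1 : p.1 - q.1 = ((m:ℤ) - k) * L := by linarith [hxy]
        have habs1 : |p.1 - q.1| < L := by rw [abs_lt]; constructor <;> linarith
        obtain ⟨hz1, hz2⟩ := small_mul_zero hL heq1 habs1
        have hfst : p.1 = q.1 := by linarith
        have hkm : k = m := by
          have : (m:ℤ) = (k:ℤ) := by linarith
          exact_mod_cast this.symm
        -- second components
        rw [hPdef, mem_filter] at hp hq
        have hmod : (p.2 + j) % L = (q.2 + j) % L := by
          rw [← hp.2, ← hq.2, hfst]
        have hdvd : L ∣ (q.2 + j) - (p.2 + j) := Int.ModEq.dvd hmod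
        obtain ⟨c, hc⟩ := hdvd
        have heq2 : p.2 - q.2 = (-c) * L := by linarith [hc]
        have habs2 : |p.2 - q.2| < L := by rw [abs_lt]; constructor <;> linarith
        obtain ⟨hz3, -⟩ := small_mul_zero hL heq2 habs2
        have hsnd : p.2 = q.2 := by linarith
        have hpq : p = q := Prod.ext hfst hsnd
        subst hpq
        subst hkm
        rfl
    calc ((∑ p ∈ P, S p : ℕ) : ℤ)
        = ((P.sigma fun p => Finset.range (S p)).card : ℤ) := by exact_mod_cast hcard
      _ ≤ ((Finset.Icc (1:ℤ) j).card : ℤ) := by exact_mod_cast hle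
      _ = j := by rw [Int.card_Icc]; omega
  -- final assembly
  set D : ℕ := ∑ p ∈ P, min (S p) n with hD
  have hsplit : n * P.card = (∑ p ∈ P, (n - S p)) + D := by
    rw [hD, ← Finset.sum_add_distrib]
    have : ∀ p ∈ P, (n - S p) + min (S p) n = n := fun p _ => by omega
    rw [Finset.sum_congr rfl this, Finset.sum_const, smul_eq_mul, mul_comm]
  have hDle : (D : ℤ) ≤ j := by
    refine le_trans ?_ hsum
    have : D ≤ ∑ p ∈ P, S p := Finset.sum_le_sum (fun p _ => min_le_left _ _)
    exact_mod_cast this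
  rw [hcount]
  have : ((n:ℤ)) * (P.card : ℤ) = ((∑ p ∈ P, (n - S p) : ℕ) : ℤ) + (D : ℤ) := by
    exact_mod_cast congrArg (Nat.cast : ℕ → ℤ) hsplit
  rw [this]
  have hD0 : (0:ℤ) ≤ D := Int.natCast_nonneg D
  rw [abs_sub_comm]
  rw [show ((∑ p ∈ P, (n - S p) : ℕ) : ℤ) + (D:ℤ) - ((∑ p ∈ P, (n - S p) : ℕ) : ℤ) = (D:ℤ) by ring]
  rwa [abs_of_nonneg hD0]
end
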